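/- arXiv:quant-ph/9904093 — 4 statements merged into one kernel-verified Lean document; each statement's English description precedes it below -/
import Mathlib

section
/- Theorem 4, part 1 (maximum-likelihood decoding succeeds with probability at least 2^{−H(X|Y)}): Let α and β be finite nonempty types and let P : α × β → ℝ be a joint probability distribution (P(x,y) ≥ 0, Σ_{x,y} P(x,y) = 1) of a pair of random variables (X, Y). Then there exists a decoding function D₀ : β → α such that Pr[D₀(Y) = X] = Σ_y P(D₀(y), y) ≥ 2^{−H(X|Y)}, where H(X|Y) = −Σ_{x,y} P(x,y) log₂( P(x,y) / q(y) ) is the conditional Shannon entropy in bits, with q(y) = Σ_x P(x,y) and terms with P(x,y) = 0 contributing 0. -/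
/-- The conditional Shannon entropy (in bits) `H(X|Y) = −Σ_{x,y} P(x,y) log₂(P(x,y)/q(y))`
of a joint distribution `P` on `α × β`, where `q(y) = Σ_x P(x,y)` is the marginal of `Y`. -/
noncomputable def condEntropy {α β : Type*} [Fintype α] [Fintype β] (P : α → β → ℝ) : ℝ :=
  -∑ x, ∑ y, P x y * Real.logb 2 (P x y / ∑ x', P x' y)

lemma gibbs_term (q r : ℝ) (hq : 0 ≤ q) (hr : 0 ≤ r) (h : 0 < q → 0 < r) :
    q * Real.log (r / q) ≤ r - q := by
  rcases eq_or_lt_of_le hq with hq0 | hq0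
  · simp [← hq0, hr]
  · have hr0 := h hq0
    have hdiv : 0 < r / q := div_pos hr0 hq0
    have := Real.log_le_sub_one_of_pos hdiv
    calc q * Real.log (r / q) ≤ q * (r / q - 1) := by nlinarith
      _ = r - q := by field_simp

/-- Theorem 4, part 1: maximum-likelihood decoding succeeds with probability at least
`2^{−H(X|Y)}`: for any joint distribution `P` of `(X, Y)` there is a decoding function
`D₀ : β → α` with `Pr[D₀(Y) = X] = Σ_y P(D₀(y), y) ≥ 2^{−H(X|Y)}`. -/
theorem decoding_prob_ge_two_pow_neg_condEntropy
    {α β : Type*} [Fintype α] [Fintype β] [Nonempty α] [Nonempty β]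
    (P : α → β → ℝ) (hP : ∀ x y, 0 ≤ P x y) (hPs : ∑ x, ∑ y, P x y = 1) :
    ∃ D₀ : β → α, ∑ y, P (D₀ y) y ≥ (2 : ℝ) ^ (-condEntropy P) := by
  classical
  obtain ⟨D₀, hD⟩ : ∃ D₀ : β → α, ∀ y x, P x y ≤ P (D₀ y) y := by
    have h : ∀ y : β, ∃ a : α, ∀ x : α, P x y ≤ P a y := by
      intro y
      obtain ⟨a, -, ha⟩ := Finset.exists_max_image Finset.univ (fun x => P x y)
        Finset.univ_nonempty
      exact ⟨a, fun x => ha x (Finset.mem_univ x)⟩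
    exact ⟨fun y => (h y).choose, fun y => (h y).choose_spec⟩
  refine ⟨D₀, ?_⟩
  set m : β → ℝ := fun y => P (D₀ y) y with hm
  set q : β → ℝ := fun y => ∑ x, P x y with hq
  set S : ℝ := ∑ y, m y with hSdef
  have hq0 : ∀ y, 0 ≤ q y := fun y => Finset.sum_nonneg fun x _ => hP x y
  have hm0 : ∀ y, 0 ≤ m y := fun y => hP _ y
  have hqm : ∀ y, 0 < q y → 0 < m y := by
    intro y hy
    by_contra h
    push_neg at h
    have hmz : m y = 0 := le_antisymm h (hm0 y)
    have : q y = 0 := by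
      apply Finset.sum_eq_zero
      intro x _
      exact le_antisymm (hmz ▸ hD y x) (hP x y)
    linarith
  have hqle : ∀ x y, P x y ≤ q y := fun x y =>
    Finset.single_le_sum (fun x' _ => hP x' y) (Finset.mem_univ x)
  have hqs : ∑ y, q y = 1 := by rw [hq, Finset.sum_comm]; exact hPs
  have hS : 0 < S := by
    obtain ⟨y, hy⟩ : ∃ y, 0 < q y := by
      by_contra h
      push_neg at h
      have : ∑ y, q y ≤ 0 := Finset.sum_nonpos fun y _ => h y
      linarith
    have := hqm y hy
    exact lt_of_lt_of_le this (Finset.single_le_sum (fun y' _ => hm0 y') (Finset.mem_univ y))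
  -- Step 1: -H ≤ ∑ y, q y * logb 2 (m y / q y)
  have step1 : -condEntropy P ≤ ∑ y, q y * Real.logb 2 (m y / q y) := by
    rw [condEntropy, neg_neg, Finset.sum_comm]
    apply Finset.sum_le_sum
    intro y _
    have : ∑ x, P x y * Real.logb 2 (m y / q y) = q y * Real.logb 2 (m y / q y) := by
      rw [hq, ← Finset.sum_mul]
    rw [← this]
    apply Finset.sum_le_sum
    intro x _
    rcases eq_or_lt_of_le (hP x y) with h0 | h0
    · simp [← h0]
    · have hqy : 0 < q y := lt_of_lt_of_le h0 (hqle x y)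
      have hmono : Real.logb 2 (P x y / q y) ≤ Real.logb 2 (m y / q y) := by
        have h1 : 0 < P x y / q y := div_pos h0 hqy
        have h2 : P x y / q y ≤ m y / q y := by gcongr; exact hD y x
        rw [Real.logb, Real.logb]
        have := Real.log_le_log h1 h2
        gcongr
      exact mul_le_mul_of_nonneg_left hmono (hP x y)
  -- Step 2: ∑ y, q y * logb 2 (m y / q y) ≤ logb 2 S
  have step2 : ∑ y, q y * Real.logb 2 (m y / q y) ≤ Real.logb 2 S := by
    have key : ∀ y, q y * Real.logb 2 (m y / q y)
        = q y * Real.logb 2 ((m y / S) / q y) + q y * Real.logb 2 S := by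
      intro y
      rcases eq_or_lt_of_le (hq0 y) with h0 | h0
      · simp [← h0]
      · have hmy := hqm y h0
        have h1 : m y / q y = ((m y / S) / q y) * S := by field_simp
        rw [h1, Real.logb_mul (by positivity) (ne_of_gt hS), mul_add]
    calc ∑ y, q y * Real.logb 2 (m y / q y)
        = (∑ y, q y * Real.logb 2 ((m y / S) / q y)) + (∑ y, q y) * Real.logb 2 S := by
          simp_rw [key, Finset.sum_add_distrib, Finset.sum_mul]
      _ ≤ 0 + 1 * Real.logb 2 S := by
          rw [hqs]
          refine add_le_add ?_ le_rfl
          have hlog2 : (0:ℝ) < Real.log 2 := Real.log_pos one_lt_two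
          have hterm : ∀ y, q y * Real.logb 2 ((m y / S) / q y)
              ≤ (m y / S - q y) / Real.log 2 := by
            intro y
            have hgib := gibbs_term (q y) (m y / S) (hq0 y)
              (div_nonneg (hm0 y) hS.le) (fun h => div_pos (hqm y h) hS)
            calc q y * Real.logb 2 ((m y / S) / q y)
                = (q y * Real.log ((m y / S) / q y)) / Real.log 2 := by
                  rw [Real.logb]; ring
              _ ≤ (m y / S - q y) / Real.log 2 := by gcongr
          calc ∑ y, q y * Real.logb 2 ((m y / S) / q y)
              ≤ ∑ y, (m y / S - q y) / Real.log 2 := Finset.sum_le_sum fun y _ => hterm y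
            _ = (∑ y, (m y / S - q y)) / Real.log 2 := by rw [← Finset.sum_div]
            _ = 0 := by
                rw [Finset.sum_sub_distrib, ← Finset.sum_div, ← hSdef,
                  div_self (ne_of_gt hS), hqs]
                simp
      _ = Real.logb 2 S := by ring
  have hfinal : (2:ℝ) ^ (-condEntropy P) ≤ S := by
    calc (2:ℝ) ^ (-condEntropy P) ≤ (2:ℝ) ^ (Real.logb 2 S) :=
          Real.rpow_le_rpow_of_exponent_le one_le_two (le_trans step1 step2)
      _ = S := Real.rpow_logb two_pos (by norm_num) hS
  exact hfinal
end

section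
/- Claim in Section 5 (projection mass of vectors from a low-dimensional subspace): Let V be a finite-dimensional complex inner product space, let E be a subspace of V, let α be a finite type, let (P_x)_{x∈α} be a family of orthogonal projections on V whose ranges are mutually orthogonal (P_x P_{x'} = 0 for x ≠ x'), and let (φ_x)_{x∈α} be unit vectors with φ_x ∈ E for every x. Then Σ_x ‖P_x φ_x‖² ≤ dim E. In particular, if dim E ≤ 2^m then Σ_x ‖P_x φ_x‖² ≤ 2^m. -/
open scoped InnerProductSpace

/-- The Claim in Section 5: if `(P_x)` are orthogonal projections with mutually
orthogonal ranges on a finite-dimensional complex inner product space `V`, and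
`(φ_x)` are unit vectors all lying in a subspace `E`, then
`Σ_x ‖P_x φ_x‖² ≤ dim E`. -/
theorem sum_proj_norm_sq_le_dim {V : Type*} [NormedAddCommGroup V]
    [InnerProductSpace ℂ V] [FiniteDimensional ℂ V]
    (E : Submodule ℂ V) {α : Type*} [Fintype α]
    (P : α → V →ₗ[ℂ] V)
    (hproj : ∀ x, P x ∘ₗ P x = P x)
    (hsa : ∀ x, LinearMap.IsSymmetric (P x))
    (horth : ∀ x x', x ≠ x' → P x ∘ₗ P x' = 0)
    (φ : α → V) (hφn : ∀ x, ‖φ x‖ = 1) (hφE : ∀ x, φ x ∈ E) :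
    ∑ x, ‖P x (φ x)‖ ^ 2 ≤ (Module.finrank ℂ E : ℝ) := by
  classical
  set e := stdOrthonormalBasis ℂ E with he
  set ψ : α → V := fun x => ((‖P x (φ x)‖ : ℂ))⁻¹ • P x (φ x) with hψ
  -- inner products of images of different projections vanish
  have hPP : ∀ x y, x ≠ y → ∀ u v : V, ⟪P x u, P y v⟫_ℂ = 0 := by
    intro x y hxy u v
    rw [hsa x]
    have h0 : P x (P y v) = 0 := by
      have := congrFun (congrArg DFunLike.coe (horth x y hxy)) v
      simpa using this
    simp [h0]
  -- self inner product
  have hself : ∀ x (u : V), ⟪u, P x u⟫_ℂ = ((‖P x u‖ : ℂ)) ^ 2 := by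
    intro x u
    have h1 : P x (P x u) = P x u := by
      have := congrFun (congrArg DFunLike.coe (hproj x)) u
      simpa using this
    calc ⟪u, P x u⟫_ℂ = ⟪u, P x (P x u)⟫_ℂ := by rw [h1]
      _ = ⟪P x u, P x u⟫_ℂ := (hsa x u (P x u)).symm
      _ = ((‖P x u‖ : ℂ)) ^ 2 := inner_self_eq_norm_sq_to_K (P x u)
  -- the key pointwise bound
  have key : ∀ x, ‖P x (φ x)‖ ^ 2 ≤ ∑ i, ‖⟪((e i : V)), ψ x⟫_ℂ‖ ^ 2 := by
    intro x
    by_cases h : P x (φ x) = 0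
    · have : ‖P x (φ x)‖ ^ 2 = 0 := by rw [h]; simp
      rw [this]
      positivity
    · have hu : (0:ℝ) < ‖P x (φ x)‖ := norm_pos_iff.mpr h
      -- ⟪ψ x, φ x⟫ = ‖P x (φ x)‖
      have h1 : ⟪ψ x, φ x⟫_ℂ = ((‖P x (φ x)‖ : ℂ)) := by
        have h2 : ⟪P x (φ x), φ x⟫_ℂ = ((‖P x (φ x)‖ : ℂ)) ^ 2 := by
          rw [hsa x (φ x) (φ x)]
          exact hself x (φ x)
        rw [hψ]
        simp only [inner_smul_left, map_inv₀, Complex.conj_ofReal, h2]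
        have hne : ((‖P x (φ x)‖ : ℂ)) ≠ 0 := by
          simp only [ne_eq, Complex.ofReal_eq_zero]
          exact ne_of_gt hu
        field_simp
      set Qψ : E := Submodule.orthogonalProjectionOnto E (ψ x) with hQψ
      have h3 : ⟪ψ x, φ x⟫_ℂ = ⟪(Qψ : V), φ x⟫_ℂ := by
        have h := Submodule.inner_orthogonalProjectionOnto_eq_of_mem_right (K := E) (⟨φ x, hφE x⟩ : E) (ψ x)
        rw [Submodule.coe_inner] at h
        exact h.symm
      have h4 : ‖P x (φ x)‖ ≤ ‖Qψ‖ := by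
        have hcs := norm_inner_le_norm (𝕜 := ℂ) ((Qψ : V)) (φ x)
        rw [← h3, h1, hφn x, mul_one, Complex.norm_real,
          Real.norm_of_nonneg (norm_nonneg _), Submodule.norm_coe] at hcs
        exact hcs
      have h5 : ‖Qψ‖ ^ 2 = ∑ i, ‖⟪((e i : V)), ψ x⟫_ℂ‖ ^ 2 := by
        have hn : ‖Qψ‖ = ‖e.repr Qψ‖ := (e.repr.norm_map Qψ).symm
        rw [hn, EuclideanSpace.norm_eq, Real.sq_sqrt (by positivity)]
        refine Finset.sum_congr rfl fun i _ => ?_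
        rw [e.repr_apply_apply, hQψ, Submodule.inner_orthogonalProjectionOnto_eq_of_mem_left]
      calc ‖P x (φ x)‖ ^ 2 ≤ ‖Qψ‖ ^ 2 := by
            apply pow_le_pow_left₀ (le_of_lt hu) h4
        _ = _ := h5
  -- the normalized vectors form an orthonormal family on their support
  have hψon : Orthonormal ℂ (fun x : {x : α // P x (φ x) ≠ 0} => ψ x.1) := by
    constructor
    · rintro ⟨x, hx⟩
      have hu : (0:ℝ) < ‖P x (φ x)‖ := norm_pos_iff.mpr hx
      simp only [hψ, norm_smul, norm_inv, Complex.norm_real, norm_norm]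
      field_simp
    · rintro ⟨x, hx⟩ ⟨y, hy⟩ hxy
      have hxy' : x ≠ y := fun hc => hxy (Subtype.ext hc)
      simp only [hψ, inner_smul_left, inner_smul_right, hPP x y hxy', mul_zero]
  -- Bessel's inequality for each basis vector
  have bessel : ∀ i, ∑ x, ‖⟪((e i : V)), ψ x⟫_ℂ‖ ^ 2 ≤ 1 := by
    intro i
    have h6 : ∑ x, ‖⟪((e i : V)), ψ x⟫_ℂ‖ ^ 2
        = ∑ x : {x : α // P x (φ x) ≠ 0}, ‖⟪((e i : V)), ψ x.1⟫_ℂ‖ ^ 2 := by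
      rw [← Finset.sum_subtype (Finset.univ.filter fun x => P x (φ x) ≠ 0)
        (by simp) (fun x => ‖⟪((e i : V)), ψ x⟫_ℂ‖ ^ 2)]
      symm
      apply Finset.sum_filter_of_ne
      intro x _ hne
      by_contra hc
      apply hne
      have : ψ x = 0 := by rw [hψ]; simp [hc]
      rw [this]
      simp
    rw [h6]
    have h7 := hψon.sum_inner_products_le (s := Finset.univ) ((e i : V))
    have h8 : ‖((e i : V))‖ = 1 := by
      rw [Submodule.norm_coe]
      exact e.orthonormal.1 i
    calc ∑ x : {x : α // P x (φ x) ≠ 0}, ‖⟪((e i : V)), ψ x.1⟫_ℂ‖ ^ 2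
        = ∑ x : {x : α // P x (φ x) ≠ 0}, ‖⟪ψ x.1, ((e i : V))⟫_ℂ‖ ^ 2 := by
          refine Finset.sum_congr rfl fun x _ => ?_
          rw [norm_inner_symm]
      _ ≤ ‖((e i : V))‖ ^ 2 := h7
      _ = 1 := by rw [h8]; norm_num
  calc ∑ x, ‖P x (φ x)‖ ^ 2
      ≤ ∑ x, ∑ i, ‖⟪((e i : V)), ψ x⟫_ℂ‖ ^ 2 := Finset.sum_le_sum fun x _ => key x
    _ = ∑ i, ∑ x, ‖⟪((e i : V)), ψ x⟫_ℂ‖ ^ 2 := Finset.sum_comm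
    _ ≤ ∑ _i : Fin (Module.finrank ℂ E), (1:ℝ) := Finset.sum_le_sum fun i _ => bessel i
    _ = (Module.finrank ℂ E : ℝ) := by simp
end

section
/- Theorem 4, part 2 (upper bound on quantum decoding probability, pure-codeword form): Let α be a finite type, let p : α → ℝ be a probability distribution (p(x) ≥ 0, Σ_x p(x) = 1), let V be a finite-dimensional complex inner product space, let E be a subspace of V with dim E ≤ 2^m, let (φ_x)_{x∈α} be unit vectors with φ_x ∈ E for every x (the codewords over m qubits, possibly embedded with ancilla in V), and let (P_x)_{x∈α} be orthogonal projections on V with mutually orthogonal ranges (P_x P_{x'} = 0 for x ≠ x'), representing the decoding measurement. Then the probability of correct decoding satisfies Σ_x p(x)·‖P_x φ_x‖² ≤ P(p, 2^m), where P(p, d) is the maximum of Σ_{x∈S} p(x) over subsets S ⊆ α with |S| ≤ d. -/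
/-- `probTop p d` is `P(p, d)`: the net probability of the `d` most likely elements,
i.e. the maximum of `Σ_{x∈S} p(x)` over subsets `S` with `|S| ≤ d`. -/
noncomputable def probTop {α : Type*} [Fintype α] (p : α → ℝ) (d : ℕ) : ℝ :=
  ((Finset.univ : Finset α).powerset.filter (fun S => S.card ≤ d)).sup'
    ⟨∅, by simp⟩ (fun S => ∑ x ∈ S, p x)

lemma sum_le_probTop {α : Type*} [Fintype α] (p : α → ℝ) (d : ℕ)
    (S : Finset α) (hS : S.card ≤ d) : ∑ x ∈ S, p x ≤ probTop p d := by
  apply Finset.le_sup' (fun S => ∑ x ∈ S, p x)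
  simp [Finset.mem_filter, Finset.mem_powerset, hS]

/-- Key combinatorial lemma: if `0 ≤ q ≤ 1` and `∑ q ≤ d`, then
`∑ p·q ≤ probTop p d`. -/
lemma weighted_le_probTop {α : Type*} [Fintype α] [DecidableEq α] (p q : α → ℝ)
    (hp : ∀ x, 0 ≤ p x) (hq0 : ∀ x, 0 ≤ q x) (hq1 : ∀ x, q x ≤ 1)
    (d : ℕ) (hd : ∑ x, q x ≤ (d : ℝ)) :
    ∑ x, p x * q x ≤ probTop p d := by
  by_cases hcard : Fintype.card α ≤ d
  · calc ∑ x, p x * q x ≤ ∑ x, p x := by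
          apply Finset.sum_le_sum
          intro x _
          exact mul_le_of_le_one_right (hp x) (hq1 x)
      _ ≤ probTop p d := sum_le_probTop p d Finset.univ (by simpa using hcard)
  · push_neg at hcard
    rcases Nat.eq_zero_or_pos d with hd0 | hdpos
    · subst hd0
      have hq : ∀ x, q x = 0 := by
        intro x
        have h2 : ∑ y, q y = 0 :=
          le_antisymm (by exact_mod_cast hd) (Finset.sum_nonneg fun y _ => hq0 y)
        have := (Finset.sum_eq_zero_iff_of_nonneg (fun y _ => hq0 y)).mp h2
        exact this x (Finset.mem_univ x)
      have : ∑ x, p x * q x = 0 := by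
        apply Finset.sum_eq_zero; intro x _; rw [hq x, mul_zero]
      rw [this]
      have := sum_le_probTop p 0 ∅ (by simp)
      simpa using this
    -- choose S of card d maximizing ∑ p over S
    · have hne : ((Finset.univ : Finset α).powerset.filter (fun S => S.card = d)).Nonempty := by
        obtain ⟨t, ht, htc⟩ := Finset.exists_subset_card_eq (s := (Finset.univ : Finset α)) (by simpa using hcard.le)
        exact ⟨t, by simp [Finset.mem_filter, htc]⟩
      obtain ⟨S, hSmem, hSmax⟩ := Finset.exists_max_image _ (fun S => ∑ x ∈ S, p x) hne
      have hScard : S.card = d := (Finset.mem_filter.mp hSmem).2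
      have hSne : S.Nonempty := Finset.card_pos.mp (hScard ▸ hdpos)
      -- swap lemma: any element outside S has p-value ≤ any element inside
      have hswap : ∀ x ∈ S, ∀ y ∉ S, p y ≤ p x := by
        intro x hx y hy
        set S' := insert y (S.erase x) with hS'
        have hyS' : y ∉ S.erase x := fun h => hy (Finset.mem_of_mem_erase h)
        have hS'card : S'.card = d := by
          rw [hS', Finset.card_insert_of_notMem hyS', Finset.card_erase_of_mem hx, hScard]
          omega
        have hS'mem : S' ∈ (Finset.univ : Finset α).powerset.filter (fun S => S.card = d) := by
          simp [Finset.mem_filter, hS'card]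
        have hle : ∑ z ∈ S', p z ≤ ∑ z ∈ S, p z := hSmax S' hS'mem
        have hsum' : ∑ z ∈ S', p z = p y + (∑ z ∈ S, p z - p x) := by
          rw [hS', Finset.sum_insert hyS', Finset.sum_erase_eq_sub hx]
        linarith [hle, hsum'.symm ▸ hle]
      -- t := min of p over S
      obtain ⟨x₀, hx₀, hx₀min⟩ := Finset.exists_min_image S p hSne
      set t := p x₀ with ht
      have ht0 : 0 ≤ t := hp x₀
      have hout : ∀ y ∉ S, p y ≤ t := fun y hy => hswap x₀ hx₀ y hy
      -- main chain
      have hsplit : ∑ x, p x * q x = ∑ x ∈ S, p x * q x + ∑ x ∈ Sᶜ, p x * q x :=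
        (Finset.sum_add_sum_compl S _).symm
      have hqsplit : ∑ x ∈ S, q x + ∑ x ∈ Sᶜ, q x = ∑ x, q x :=
        Finset.sum_add_sum_compl S _
      have h2 : ∑ x ∈ Sᶜ, p x * q x ≤ t * ∑ x ∈ Sᶜ, q x := by
        rw [Finset.mul_sum]
        apply Finset.sum_le_sum
        intro x hx
        exact mul_le_mul_of_nonneg_right (hout x (Finset.mem_compl.mp hx)) (hq0 x)
      have h3 : ∑ x ∈ Sᶜ, q x ≤ ∑ x ∈ S, (1 - q x) := by
        have : ∑ x ∈ S, (1 - q x) = (d : ℝ) - ∑ x ∈ S, q x := by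
          rw [Finset.sum_sub_distrib, Finset.sum_const, hScard, nsmul_eq_mul, mul_one]
        rw [this]
        linarith [hqsplit]
      have h4 : t * ∑ x ∈ Sᶜ, q x ≤ ∑ x ∈ S, p x * (1 - q x) := by
        calc t * ∑ x ∈ Sᶜ, q x ≤ t * ∑ x ∈ S, (1 - q x) := by
              exact mul_le_mul_of_nonneg_left h3 ht0
          _ = ∑ x ∈ S, t * (1 - q x) := Finset.mul_sum _ _ _
          _ ≤ ∑ x ∈ S, p x * (1 - q x) := by
              apply Finset.sum_le_sum
              intro x hx
              exact mul_le_mul_of_nonneg_right (hx₀min x hx) (by linarith [hq1 x])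
      calc ∑ x, p x * q x = ∑ x ∈ S, p x * q x + ∑ x ∈ Sᶜ, p x * q x := hsplit
        _ ≤ ∑ x ∈ S, p x * q x + ∑ x ∈ S, p x * (1 - q x) := by linarith
        _ = ∑ x ∈ S, p x := by
            rw [← Finset.sum_add_distrib]
            apply Finset.sum_congr rfl
            intro x _; ring
        _ ≤ probTop p d := sum_le_probTop p d S (le_of_eq hScard)

open RCLike in
/-- For a self-adjoint idempotent `P`, `‖P v‖² = re ⟪v, P v⟫`. -/
lemma proj_norm_sq {V : Type*} [NormedAddCommGroup V] [InnerProductSpace ℂ V]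
    (P : V →ₗ[ℂ] V) (hp : P ∘ₗ P = P) (hsa : LinearMap.IsSymmetric P) (v : V) :
    ‖P v‖ ^ 2 = RCLike.re (inner ℂ v (P v) : ℂ) := by
  have hP2 : P (P v) = P v := DFunLike.congr_fun hp v
  have h1 : (inner ℂ (P v) (P v) : ℂ) = inner ℂ v (P v) := by
    rw [hsa v (P v), hP2]
  rw [← h1]
  exact (InnerProductSpace.norm_sq_eq_re_inner (P v))

lemma proj_norm_le {V : Type*} [NormedAddCommGroup V] [InnerProductSpace ℂ V]
    (P : V →ₗ[ℂ] V) (hp : P ∘ₗ P = P) (hsa : LinearMap.IsSymmetric P) (v : V) :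
    ‖P v‖ ≤ ‖v‖ := by
  have h1 := proj_norm_sq P hp hsa v
  have h2 : RCLike.re (inner ℂ v (P v) : ℂ) ≤ ‖(inner ℂ v (P v) : ℂ)‖ :=
    RCLike.re_le_norm _
  have h3 : ‖(inner ℂ v (P v) : ℂ)‖ ≤ ‖v‖ * ‖P v‖ := norm_inner_le_norm v (P v)
  by_cases hz : ‖P v‖ = 0
  · rw [hz]; exact norm_nonneg v
  · have hpos : 0 < ‖P v‖ := lt_of_le_of_ne (norm_nonneg _) (Ne.symm hz)
    nlinarith [h1, h2, h3]

/-- Theorem 4, part 2 (pure-codeword form): if the codewords `φ_x` are unit vectors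
lying in a subspace `E` of dimension at most `2^m` (an encoding over `m` qubits,
possibly embedded with ancilla in `V`) and the decoding measurement is given by
orthogonal projections `P_x` with mutually orthogonal ranges, then the probability of
correct decoding satisfies `Σ_x p(x)·‖P_x φ_x‖² ≤ P(p, 2^m)`. -/
theorem decoding_prob_le_probTop {α : Type*} [Fintype α]
    (p : α → ℝ) (h0 : ∀ x, 0 ≤ p x) (h1 : ∑ x, p x = 1)
    (m : ℕ) {V : Type*} [NormedAddCommGroup V] [InnerProductSpace ℂ V]
    [FiniteDimensional ℂ V]
    (E : Submodule ℂ V) (hdim : Module.finrank ℂ E ≤ 2 ^ m)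
    (φ : α → V) (hφn : ∀ x, ‖φ x‖ = 1) (hφE : ∀ x, φ x ∈ E)
    (P : α → V →ₗ[ℂ] V)
    (hproj : ∀ x, P x ∘ₗ P x = P x)
    (hsa : ∀ x, LinearMap.IsSymmetric (P x))
    (horth : ∀ x x', x ≠ x' → P x ∘ₗ P x' = 0) :
    ∑ x, p x * ‖P x (φ x)‖ ^ 2 ≤ probTop p (2 ^ m) := by
  classical
  set n := Module.finrank ℂ E with hn
  set b := stdOrthonormalBasis ℂ E with hb
  set e : Fin n → V := fun i => (b i : V) with he
  -- each codeword probability is at most 1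
  have hq1 : ∀ x, ‖P x (φ x)‖ ^ 2 ≤ 1 := by
    intro x
    have := proj_norm_le (P x) (hproj x) (hsa x) (φ x)
    rw [hφn x] at this
    nlinarith [norm_nonneg (P x (φ x))]
  have hq0 : ∀ x, (0:ℝ) ≤ ‖P x (φ x)‖ ^ 2 := fun x => sq_nonneg _
  -- Bessel: ‖P x (φ x)‖² ≤ ∑ i, ‖P x (e i)‖²
  have hbessel : ∀ x, ‖P x (φ x)‖ ^ 2 ≤ ∑ i, ‖P x (e i)‖ ^ 2 := by
    intro x
    set w : E := ⟨φ x, hφE x⟩ with hw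
    have hrepr : φ x = ∑ i, b.repr w i • e i := by
      have h2 : ((∑ i, b.repr w i • b i : E) : V) = (w : V) := by rw [b.sum_repr w]
      have h3 : φ x = ((w : E) : V) := rfl
      rw [h3, ← h2]
      simp [e]
    have hPsum : P x (φ x) = ∑ i, b.repr w i • P x (e i) := by
      rw [hrepr, map_sum]
      simp [map_smul]
    have hnorm : ‖P x (φ x)‖ ≤ ∑ i, ‖b.repr w i‖ * ‖P x (e i)‖ := by
      rw [hPsum]
      refine (norm_sum_le _ _).trans ?_
      apply le_of_eq
      apply Finset.sum_congr rfl
      intro i _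
      rw [norm_smul]
    have hcs : (∑ i, ‖b.repr w i‖ * ‖P x (e i)‖) ^ 2 ≤
        (∑ i, ‖b.repr w i‖ ^ 2) * (∑ i, ‖P x (e i)‖ ^ 2) :=
      Finset.sum_mul_sq_le_sq_mul_sq _ _ _
    have hwnorm : ∑ i, ‖b.repr w i‖ ^ 2 = 1 := by
      have h3 : ‖b.repr w‖ = ‖w‖ := b.repr.norm_map w
      have h4 : ‖(w : V)‖ = 1 := by rw [hw]; exact hφn x
      have h5 : ‖w‖ = 1 := h4
      have h6 : ‖b.repr w‖ = Real.sqrt (∑ i, ‖b.repr w i‖ ^ 2) :=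
        EuclideanSpace.norm_eq (b.repr w)
      rw [h3, h5] at h6
      have h7 : (0:ℝ) ≤ ∑ i, ‖b.repr w i‖ ^ 2 :=
        Finset.sum_nonneg fun i _ => sq_nonneg _
      nlinarith [Real.sq_sqrt h7]
    calc ‖P x (φ x)‖ ^ 2 ≤ (∑ i, ‖b.repr w i‖ * ‖P x (e i)‖) ^ 2 := by
          apply pow_le_pow_left₀ (norm_nonneg _) hnorm
      _ ≤ (∑ i, ‖b.repr w i‖ ^ 2) * (∑ i, ‖P x (e i)‖ ^ 2) := hcs
      _ = ∑ i, ‖P x (e i)‖ ^ 2 := by rw [hwnorm, one_mul]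
  -- for any unit vector v, ∑ x, ‖P x v‖² ≤ 1
  have hcol : ∀ v : V, ‖v‖ = 1 → ∑ x, ‖P x v‖ ^ 2 ≤ 1 := by
    intro v hv
    set Q : V →ₗ[ℂ] V := ∑ x, P x with hQ
    have hQproj : Q ∘ₗ Q = Q := by
      apply LinearMap.ext
      intro u
      calc (Q ∘ₗ Q) u = Q (Q u) := rfl
        _ = ∑ x, ∑ x', P x (P x' u) := by
            simp only [hQ, LinearMap.sum_apply, map_sum]
            exact Finset.sum_comm
        _ = ∑ x, P x (P x u) := by
            apply Finset.sum_congr rfl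
            intro x _
            rw [Finset.sum_eq_single x]
            · intro y _ hy
              exact DFunLike.congr_fun (horth x y (Ne.symm hy)) u
            · intro h; exact absurd (Finset.mem_univ x) h
        _ = ∑ x, P x u := by
            apply Finset.sum_congr rfl
            intro x _
            exact DFunLike.congr_fun (hproj x) u
        _ = Q u := by simp only [hQ, LinearMap.sum_apply]
    have hQsa : LinearMap.IsSymmetric Q := by
      intro u v'
      rw [hQ]
      simp only [LinearMap.sum_apply, inner_sum, sum_inner]
      apply Finset.sum_congr rfl
      intro x _
      exact hsa x u v'
    have hsum : ∑ x, ‖P x v‖ ^ 2 = ‖Q v‖ ^ 2 := by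
      rw [proj_norm_sq Q hQproj hQsa v]
      have : (inner ℂ v (Q v) : ℂ) = ∑ x, (inner ℂ v (P x v) : ℂ) := by
        rw [hQ]; simp [inner_sum]
      rw [this, map_sum]
      apply Finset.sum_congr rfl
      intro x _
      exact proj_norm_sq (P x) (hproj x) (hsa x) v
    rw [hsum]
    have := proj_norm_le Q hQproj hQsa v
    rw [hv] at this
    nlinarith [norm_nonneg (Q v)]
  -- total: ∑ x, ‖P x (φ x)‖² ≤ n ≤ 2^m
  have htotal : ∑ x, ‖P x (φ x)‖ ^ 2 ≤ ((2 ^ m : ℕ) : ℝ) := by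
    calc ∑ x, ‖P x (φ x)‖ ^ 2 ≤ ∑ x, ∑ i, ‖P x (e i)‖ ^ 2 :=
          Finset.sum_le_sum fun x _ => hbessel x
      _ = ∑ i, ∑ x, ‖P x (e i)‖ ^ 2 := Finset.sum_comm
      _ ≤ ∑ _i : Fin n, (1:ℝ) := by
          apply Finset.sum_le_sum
          intro i _
          apply hcol (e i)
          exact b.orthonormal.1 i
      _ = (n : ℝ) := by simp
      _ ≤ ((2 ^ m : ℕ) : ℝ) := by exact_mod_cast hdim
  exact weighted_le_probTop p (fun x => ‖P x (φ x)‖ ^ 2) h0 hq0 hq1 (2 ^ m) htotal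
end

section
/- Communication corollary of Theorem 4, part 2 (m ≥ n − log(1/δ) for transmitting n uniform bits over m qubits): Let n, m be natural numbers and 0 < δ ≤ 1. Let V be a finite-dimensional complex inner product space, let E be a subspace of V with dim E ≤ 2^m, let (φ_x), indexed by x ∈ {0,1}^n, be unit vectors with φ_x ∈ E, and let (P_x), indexed by x ∈ {0,1}^n, be orthogonal projections on V with mutually orthogonal ranges (P_x P_{x'} = 0 for x ≠ x'). If the average decoding probability satisfies 2^{−n} Σ_{x∈{0,1}^n} ‖P_x φ_x‖² ≥ δ, then (m : ℝ) ≥ n − log₂(1/δ). -/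
open scoped InnerProductSpace


/-- Communication corollary of Theorem 4, part 2: if `n` uniformly random bits are
transmitted as pure states over `m` qubits (codewords `φ_x` lying in a subspace `E`
of dimension at most `2^m`) and decoded by an orthogonal measurement `(P_x)` with
average success probability at least `δ`, then `m ≥ n − log₂(1/δ)`. -/
theorem qubits_ge_bits_sub_log {n m : ℕ} {δ : ℝ} (hδ : 0 < δ) (hδ1 : δ ≤ 1)
    {V : Type*} [NormedAddCommGroup V] [InnerProductSpace ℂ V] [FiniteDimensional ℂ V]
    (E : Submodule ℂ V) (hdim : Module.finrank ℂ E ≤ 2 ^ m)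
    (φ : (Fin n → Bool) → V) (hφn : ∀ x, ‖φ x‖ = 1) (hφE : ∀ x, φ x ∈ E)
    (P : (Fin n → Bool) → V →ₗ[ℂ] V)
    (hproj : ∀ x, P x ∘ₗ P x = P x)
    (hsa : ∀ x, LinearMap.IsSymmetric (P x))
    (horth : ∀ x x', x ≠ x' → P x ∘ₗ P x' = 0)
    (havg : ((2 : ℝ) ^ n)⁻¹ * ∑ x, ‖P x (φ x)‖ ^ 2 ≥ δ) :
    (m : ℝ) ≥ (n : ℝ) - Real.logb 2 (1 / δ) := by
  classical
  have h1 : ∀ x, ⟪φ x, P x (φ x)⟫_ℂ = (‖P x (φ x)‖ : ℂ) ^ 2 := by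
    intro x
    have hidem : P x (P x (φ x)) = P x (φ x) := congrArg (fun L => L (φ x)) (hproj x)
    calc ⟪φ x, P x (φ x)⟫_ℂ = ⟪φ x, P x (P x (φ x))⟫_ℂ := by rw [hidem]
      _ = ⟪P x (φ x), P x (φ x)⟫_ℂ := (hsa x (φ x) (P x (φ x))).symm
      _ = (‖P x (φ x)‖ : ℂ) ^ 2 := inner_self_eq_norm_sq_to_K _
  have hkey : ∑ x, ‖P x (φ x)‖ ^ 2 ≤ (Module.finrank ℂ E : ℝ) := by
    set S : Finset (Fin n → Bool) := Finset.univ.filter (fun x => P x (φ x) ≠ 0) with hSdef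
    have hmemS : ∀ x : S, P x.1 (φ x.1) ≠ 0 := fun x =>
      (Finset.mem_filter.mp x.2).2
    set ψ : S → V := fun x => ((‖P x.1 (φ x.1)‖ : ℂ))⁻¹ • P x.1 (φ x.1) with hψ
    have hON : Orthonormal ℂ ψ := by
      rw [orthonormal_iff_ite]
      intro i j
      by_cases hij : i = j
      · subst hij
        have hc : (‖P i.1 (φ i.1)‖ : ℂ) ≠ 0 := by
          simpa using hmemS i
        rw [if_pos rfl, hψ]
        dsimp only
        rw [inner_smul_left, inner_smul_right, inner_self_eq_norm_sq_to_K, map_inv₀,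
          Complex.conj_ofReal]
        field_simp
        rfl
      · have h00 : P i.1 (P j.1 (φ j.1)) = 0 := by
          have := congrArg (fun L => L (φ j.1)) (horth i.1 j.1 (fun h => hij (Subtype.ext h)))
          simpa using this
        have h0 : ⟪P i.1 (φ i.1), P j.1 (φ j.1)⟫_ℂ = 0 := by
          rw [hsa i.1, h00, inner_zero_right]
        simp [hψ, inner_smul_left, inner_smul_right, h0, hij]
    set b := stdOrthonormalBasis ℂ E with hb
    have hper : ∀ x : S,
        ‖P x.1 (φ x.1)‖ ^ 2 ≤ ∑ i, ‖⟪ψ x, ((b i : E) : V)⟫_ℂ‖ ^ 2 := by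
      intro x
      set c := ‖P x.1 (φ x.1)‖ with hc
      have hc0 : c ≠ 0 := by simpa [hc] using hmemS x
      have hcpos : 0 < c := lt_of_le_of_ne (norm_nonneg _) (Ne.symm hc0)
      have hcc : (c : ℂ) ≠ 0 := by exact_mod_cast hc0
      have hinner : ⟪ψ x, φ x.1⟫_ℂ = (c : ℂ) := by
        rw [hψ]
        dsimp only
        rw [inner_smul_left, map_inv₀, Complex.conj_ofReal, ← inner_conj_symm, h1 x.1]
        rw [map_pow, Complex.conj_ofReal]
        field_simp
        ring
      set q := E.orthogonalProjectionOnto (ψ x) with hq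
      have h2 : ⟪ψ x, φ x.1⟫_ℂ = ⟪q, (⟨φ x.1, hφE x.1⟩ : E)⟫_ℂ := by
        rw [hq, Submodule.inner_orthogonalProjectionOnto_eq_of_mem_right]
      have h3 : c ≤ ‖q‖ := by
        have hcs := norm_inner_le_norm (𝕜 := ℂ) q (⟨φ x.1, hφE x.1⟩ : E)
        rw [← h2, hinner] at hcs
        have hw : ‖(⟨φ x.1, hφE x.1⟩ : E)‖ = 1 := by
          simpa using hφn x.1
        rw [hw, mul_one] at hcs
        simpa [abs_of_pos hcpos] using hcs
      have h4'' := congrArg (RCLike.re (K := ℂ)) (b.sum_inner_mul_inner q q)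
      rw [map_sum] at h4''
      have h4 : ‖q‖ ^ 2 = ∑ i, ‖⟪b i, q⟫_ℂ‖ ^ 2 := by
        rw [← inner_self_eq_norm_sq (𝕜 := ℂ) q, ← h4'']
        refine Finset.sum_congr rfl fun i _ => ?_
        rw [← inner_conj_symm q (b i), RCLike.conj_mul]
        norm_cast
      have h5 : ∀ i, ⟪b i, q⟫_ℂ = ⟪((b i : E) : V), ψ x⟫_ℂ := fun i =>
        Submodule.inner_orthogonalProjectionOnto_eq_of_mem_left _ _
      calc c ^ 2 ≤ ‖q‖ ^ 2 := by nlinarith [norm_nonneg q]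
        _ = ∑ i, ‖⟪b i, q⟫_ℂ‖ ^ 2 := h4
        _ = ∑ i, ‖⟪ψ x, ((b i : E) : V)⟫_ℂ‖ ^ 2 := by
            refine Finset.sum_congr rfl fun i _ => ?_
            rw [h5 i, ← norm_inner_symm]
    have hS : ∑ x, ‖P x (φ x)‖ ^ 2 = ∑ x : S, ‖P x.1 (φ x.1)‖ ^ 2 := by
      rw [Finset.sum_coe_sort S (fun x => ‖P x (φ x)‖ ^ 2)]
      rw [hSdef]
      exact (Finset.sum_filter_of_ne (fun x _ h => by
        intro h0; rw [h0] at h; simp at h)).symm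
    calc ∑ x, ‖P x (φ x)‖ ^ 2
        = ∑ x : S, ‖P x.1 (φ x.1)‖ ^ 2 := hS
      _ ≤ ∑ x : S, ∑ i, ‖⟪ψ x, ((b i : E) : V)⟫_ℂ‖ ^ 2 :=
          Finset.sum_le_sum fun x _ => hper x
      _ = ∑ i, ∑ x : S, ‖⟪ψ x, ((b i : E) : V)⟫_ℂ‖ ^ 2 := Finset.sum_comm
      _ ≤ ∑ _i : Fin (Module.finrank ℂ E), (1 : ℝ) := by
          refine Finset.sum_le_sum fun i _ => ?_
          have hbess := hON.sum_inner_products_le (((b i : E) : V)) (s := Finset.univ)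
          have hbi : ‖((b i : E) : V)‖ = 1 := b.orthonormal.1 i
          rw [hbi] at hbess
          simpa using hbess
      _ = (Module.finrank ℂ E : ℝ) := by simp
  -- arithmetic part
  have h2n : (0 : ℝ) < 2 ^ n := by positivity
  have hδ2 : δ * 2 ^ n ≤ 2 ^ m := by
    rw [ge_iff_le, le_inv_mul_iff₀ h2n] at havg
    have h2' : (Module.finrank ℂ E : ℝ) ≤ 2 ^ m := by exact_mod_cast hdim
    calc δ * 2 ^ n = 2 ^ n * δ := mul_comm _ _
      _ ≤ ∑ x, ‖P x (φ x)‖ ^ 2 := havg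
      _ ≤ (Module.finrank ℂ E : ℝ) := hkey
      _ ≤ 2 ^ m := h2'
  have hδ2npos : (0 : ℝ) < δ * 2 ^ n := by positivity
  have hlog : Real.logb 2 (δ * 2 ^ n) ≤ Real.logb 2 (2 ^ m) :=
    Real.logb_le_logb_of_le (by norm_num) hδ2npos hδ2
  rw [Real.logb_mul (ne_of_gt hδ) (ne_of_gt h2n), Real.logb_pow, Real.logb_pow,
    Real.logb_self_eq_one (by norm_num : (1:ℝ) < 2)] at hlog
  rw [ge_iff_le, sub_le_iff_le_add, one_div, Real.logb_inv]
  linarith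
end
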